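/- Let ψ₁: ℝ → (0,∞) be an admissible weight function and let ρ: ℝ → ℝ be continuous, bounded, and sigmoidal, i.e. lim_{z→−∞} ρ(z) = 0 and lim_{z→∞} ρ(z) = 1, with lim_{z→±∞} |ρ(az+b)|/ψ₁(z) = 0 for all a ∈ ℕ₀ and b ∈ ℝ. Then ρ is ψ₁-discriminatory (for every signed Radon measure μ on ℝ with ∫_ℝ ψ₁ d|μ| < ∞ satisfying ∫_ℝ ρ(az+b) μ(dz) = 0 for all a ∈ ℕ₀ and b ∈ ℝ it follows that μ = 0), and consequently the set 𝒩𝒩^ρ := { z ↦ Σ_{n=1}^N w_n ρ(a_n z + b_n) : N ∈ ℕ, a_n ∈ ℕ₀, w_n, b_n ∈ ℝ } is dense in 𝓑_{ψ₁}(ℝ). -/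

import Mathlib

open Filter Topology MeasureTheory

/-- `f` belongs to `𝓑_{ψ₁}(ℝ)`, the closure of the bounded continuous functions with
respect to the weighted norm `‖f‖ = sup_z |f z| / ψ₁ z`. -/
def MemBpsi (ψ₁ : ℝ → ℝ) (f : ℝ → ℝ) : Prop :=
  ∀ ε > (0 : ℝ), ∃ g : ℝ → ℝ, Continuous g ∧ (∃ C : ℝ, ∀ z, |g z| ≤ C) ∧
    ∀ z, |f z - g z| ≤ ε * ψ₁ z

/-- The set of one-dimensional neural networks
`𝒩𝒩^ρ = { z ↦ Σ_{n=1}^N w_n ρ(a_n z + b_n) : N ∈ ℕ, a_n ∈ ℕ₀, w_n, b_n ∈ ℝ }`. -/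
def NNset (ρ : ℝ → ℝ) : Set (ℝ → ℝ) :=
  {φ | ∃ (N : ℕ) (a : Fin N → ℕ) (w b : Fin N → ℝ),
    φ = fun z => ∑ n, w n * ρ ((a n : ℝ) * z + b n)}

/-- The integral of `f` against a signed measure `μ`, via its Jordan decomposition
`μ = μ⁺ - μ⁻`. -/
noncomputable def signedIntegral (μ : SignedMeasure ℝ) (f : ℝ → ℝ) : ℝ :=
  (∫ z, f z ∂μ.toJordanDecomposition.posPart) - (∫ z, f z ∂μ.toJordanDecomposition.negPart)

set_option maxHeartbeats 1000000


lemma psi_lower (ψ₁ : ℝ → ℝ) (hψpos : ∀ z, 0 < ψ₁ z)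
    (hψadm : ∀ R > 0, IsCompact {z : ℝ | ψ₁ z ≤ R}) :
    ∃ c > 0, ∀ z, c ≤ ψ₁ z := by
  by_contra hc
  push_neg at hc
  have hne : ∀ n : ℕ, {z : ℝ | ψ₁ z ≤ 1 / (n + 1)}.Nonempty := by
    intro n
    obtain ⟨z, hz⟩ := hc (1 / (n + 1)) (by positivity)
    exact ⟨z, hz.le⟩
  have hcomp : ∀ n : ℕ, IsCompact {z : ℝ | ψ₁ z ≤ 1 / (n + 1)} :=
    fun n => hψadm _ (by positivity)
  have hsub : ∀ n : ℕ, {z : ℝ | ψ₁ z ≤ 1 / (n + 1 + 1 : ℝ)} ⊆ {z : ℝ | ψ₁ z ≤ 1 / (n + 1 : ℝ)} := by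
    intro n z hz
    have h1 : ψ₁ z ≤ 1 / (n + 1 + 1 : ℝ) := hz
    have h2 : (1 : ℝ) / (n + 1 + 1) ≤ 1 / (n + 1) :=
      one_div_le_one_div_of_le (by positivity) (by linarith)
    exact le_trans h1 h2
  obtain ⟨z, hz⟩ := IsCompact.nonempty_iInter_of_sequence_nonempty_isCompact_isClosed
    (fun n => {z : ℝ | ψ₁ z ≤ 1 / (n + 1)})
    (fun n => by exact_mod_cast hsub n)
    hne (hcomp 0) (fun n => (hcomp n).isClosed)
  have hzall : ∀ n : ℕ, ψ₁ z ≤ 1 / (n + 1) := fun n => Set.mem_iInter.1 hz n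
  obtain ⟨n, hn⟩ := exists_nat_one_div_lt (hψpos z)
  exact absurd (hzall n) (not_le.2 hn)

lemma psi_large (ψ₁ : ℝ → ℝ)
    (hψadm : ∀ R > 0, IsCompact {z : ℝ | ψ₁ z ≤ R}) (R : ℝ) (hR : 0 < R) :
    ∃ M > 0, ∀ z : ℝ, M ≤ |z| → R ≤ ψ₁ z := by
  obtain ⟨r, hr⟩ := ((hψadm R hR).isBounded).subset_closedBall 0
  refine ⟨max r 0 + 1, by positivity, fun z hz => ?_⟩
  by_contra hlt
  have hz' : z ∈ Metric.closedBall (0 : ℝ) r := hr (le_of_not_ge hlt)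
  rw [Metric.mem_closedBall, Real.dist_eq, sub_zero] at hz'
  have : |z| ≤ max r 0 := le_max_of_le_left hz'
  linarith [le_trans hz this]

lemma sig_tail (ρ : ℝ → ℝ) (hsig₀ : Tendsto ρ atBot (𝓝 0)) (hsig₁ : Tendsto ρ atTop (𝓝 1))
    (δ : ℝ) (hδ : 0 < δ) :
    ∃ T > 0, (∀ u : ℝ, T ≤ u → |ρ u - 1| ≤ δ) ∧ (∀ u : ℝ, u ≤ -T → |ρ u| ≤ δ) := by
  obtain ⟨T₁, hT₁⟩ := (eventually_atTop.1 ((Metric.tendsto_nhds.1 hsig₁ δ hδ)))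
  obtain ⟨T₂, hT₂⟩ := (eventually_atBot.1 ((Metric.tendsto_nhds.1 hsig₀ δ hδ)))
  refine ⟨max 1 (max T₁ (-T₂)), by positivity, fun u hu => ?_, fun u hu => ?_⟩
  · have : T₁ ≤ u := le_trans (le_max_of_le_right (le_max_left _ _)) hu
    have := hT₁ u this
    rw [Real.dist_eq] at this
    exact this.le
  · have h1 : -T₂ ≤ max 1 (max T₁ (-T₂)) := le_max_of_le_right (le_max_right _ _)
    have : u ≤ T₂ := by linarith
    have := hT₂ u this
    rw [Real.dist_eq, sub_zero] at this
    exact this.le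


lemma nn_uniform_approx (ρ : ℝ → ℝ) (hρ : Continuous ρ)
    (C : ℝ) (hC : ∀ z, |ρ z| ≤ C)
    (hsig₀ : Tendsto ρ atBot (𝓝 0)) (hsig₁ : Tendsto ρ atTop (𝓝 1))
    (h : ℝ → ℝ) (hcont : Continuous h) (S : ℝ) (hS : 0 < S)
    (hsupp : ∀ z : ℝ, S ≤ |z| → h z = 0)
    (δ0 : ℝ) (hδ0 : 0 < δ0) :
    ∃ φ ∈ NNset ρ, ∀ z, |h z - φ z| ≤ δ0 := by
  classical
  have hC0 : (0 : ℝ) ≤ C := le_trans (abs_nonneg _) (hC 0)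
  -- uniform continuity of h
  have htend : Tendsto h (cocompact ℝ) (𝓝 0) := by
    rw [cocompact_eq_atBot_atTop]
    have h0 : ∀ᶠ z in (atBot : Filter ℝ) ⊔ atTop, h z = 0 := by
      rw [eventually_sup]
      constructor
      · filter_upwards [eventually_le_atBot (-S)] with z hz
        exact hsupp z (by rw [abs_of_nonpos (by linarith)]; linarith)
      · filter_upwards [eventually_ge_atTop S] with z hz
        exact hsupp z (by rw [abs_of_nonneg (by linarith)]; linarith)
    exact Tendsto.congr' (by filter_upwards [h0] with z hz using hz.symm) tendsto_const_nhds
  have huc : UniformContinuous h := hcont.uniformContinuous_of_tendsto_cocompact htend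
  set δ : ℝ := δ0 / (6 * (C + 1)) with hδdef
  have hδ : 0 < δ := by positivity
  obtain ⟨η, hη, hηs⟩ := Metric.uniformContinuous_iff.1 huc δ hδ
  set s : ℝ := η / 2 with hsdef
  have hs : 0 < s := by positivity
  -- knots
  set K : ℕ := ⌈(2 * S) / s⌉₊ + 1 with hKdef
  have hKs : 2 * S ≤ (K : ℝ) * s := by
    have h1 : (2 * S) / s ≤ (⌈(2 * S) / s⌉₊ : ℝ) := Nat.le_ceil _
    have h2 : ((⌈(2 * S) / s⌉₊ : ℝ)) ≤ (K : ℝ) := by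
      rw [hKdef]; push_cast; linarith
    calc 2 * S = ((2 * S) / s) * s := by field_simp
    _ ≤ (K : ℝ) * s := by
        apply mul_le_mul_of_nonneg_right (le_trans h1 h2) hs.le
  set t : ℕ → ℝ := fun k => -S + k * s with htdef
  have ht_mono : Monotone t := by
    intro k l hkl
    simp only [htdef]
    have : (k : ℝ) ≤ l := Nat.cast_le.2 hkl
    nlinarith
  have htsucc : ∀ k : ℕ, t (k + 1) = t k + s := by
    intro k; simp only [htdef]; push_cast; ring
  -- tail threshold
  set δ' : ℝ := δ0 / (6 * ((K + 1) * (δ + 1))) with hδ'def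
  have hδ' : 0 < δ' := by positivity
  obtain ⟨T, hT, hTtop, hTbot⟩ := sig_tail ρ hsig₀ hsig₁ δ' hδ'
  set A : ℕ := ⌈T / s⌉₊ + 1 with hAdef
  have hAs : T ≤ (A : ℝ) * s := by
    have h1 : T / s ≤ (⌈T / s⌉₊ : ℝ) := Nat.le_ceil _
    have h2 : ((⌈T / s⌉₊ : ℝ)) ≤ (A : ℝ) := by rw [hAdef]; push_cast; linarith
    calc T = (T / s) * s := by field_simp
    _ ≤ (A : ℝ) * s := mul_le_mul_of_nonneg_right (le_trans h1 h2) hs.le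
  -- coefficients
  set G : ℕ → ℝ := fun k => h (t k - s) with hGdef
  set c : ℕ → ℝ := fun k => G (k + 1) - G k with hcdef
  have hGsucc : ∀ k : ℕ, G (k + 1) = h (t k) := by
    intro k
    simp only [hGdef]
    congr 1
    rw [htsucc k]; ring
  have hc : ∀ k : ℕ, |c k| ≤ δ := by
    intro k
    have : dist (h (t k)) (h (t k - s)) < δ := by
      apply hηs
      rw [Real.dist_eq]
      have : t k - (t k - s) = s := by ring
      rw [this, abs_of_pos hs]
      rw [hsdef]; linarith
    simp only [hcdef, hGsucc k]
    rw [Real.dist_eq] at this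
    exact this.le
  have hG0 : G 0 = 0 := by
    apply hsupp
    simp only [hGdef, htdef]
    push_cast
    rw [abs_of_nonpos (by nlinarith)]
    nlinarith
  have htK : S ≤ t K := by simp only [htdef]; nlinarith
  -- the network
  set B : ℕ → ℝ := fun k => -((A : ℝ) * t k) with hBdef
  set φ : ℝ → ℝ := fun z => ∑ k ∈ Finset.range (K + 1), c k * ρ ((A : ℝ) * z + B k) with hφdef
  refine ⟨φ, ?_, ?_⟩
  · refine ⟨K + 1, fun _ => A, fun n => c n, fun n => B n, funext fun z => ?_⟩
    show (∑ k ∈ Finset.range (K + 1), c k * ρ ((A : ℝ) * z + B k)) = _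
    exact (Fin.sum_univ_eq_sum_range (fun k => c k * ρ ((A : ℝ) * z + B k)) (K + 1)).symm
  intro z
  set χ : ℕ → ℝ := fun k => if t k ≤ z then 1 else 0 with hχdef
  -- step 2 : the step-function sum approximates h
  have step2 : |(∑ k ∈ Finset.range (K + 1), c k * χ k) - h z| ≤ δ := by
    rcases lt_or_ge z (t 0) with hz0 | hz0
    · have hall : ∀ k ∈ Finset.range (K + 1), c k * χ k = 0 := by
        intro k _
        have : ¬ t k ≤ z := fun hle => absurd (lt_of_le_of_lt (le_trans (ht_mono (Nat.zero_le k)) hle) hz0) (lt_irrefl _)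
        simp [hχdef, this]
      rw [Finset.sum_eq_zero hall]
      have hz' : h z = 0 := by
        apply hsupp
        have : z < -S := by simpa [htdef] using hz0
        rw [abs_of_nonpos (by linarith)]; linarith
      rw [hz']; simpa using hδ.le
    rcases le_or_gt (t K) z with hzK | hzK
    · have hall : ∀ k ∈ Finset.range (K + 1), c k * χ k = c k := by
        intro k hk
        have hk' : k ≤ K := Nat.lt_succ_iff.1 (Finset.mem_range.1 hk)
        have : t k ≤ z := le_trans (ht_mono hk') hzK
        simp [hχdef, this]
      rw [Finset.sum_congr rfl hall, Finset.sum_range_sub G]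
      rw [hGsucc K, hG0, sub_zero]
      have h1 : h (t K) = 0 := hsupp _ (by rw [abs_of_pos (lt_of_lt_of_le hS htK)]; exact htK)
      have h2 : h z = 0 := hsupp _ (by rw [abs_of_pos (lt_of_lt_of_le hS (le_trans htK hzK))]; linarith [le_trans htK hzK])
      rw [h1, h2]; simpa using hδ.le
    -- main case
    · set j : ℕ := Nat.findGreatest (fun k => t k ≤ z) K with hjdef
      have hj0 : t j ≤ z := Nat.findGreatest_spec (P := fun k => t k ≤ z) (Nat.zero_le K) hz0
      have hjK : j ≤ K := Nat.findGreatest_le K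
      have hjlt : j < K := by
        rcases lt_or_eq_of_le hjK with h | h
        · exact h
        · exfalso; rw [h] at hj0; exact absurd hj0 (not_le.2 hzK)
      have hj1 : z < t (j + 1) := by
        by_contra hcon
        push_neg at hcon
        exact Nat.findGreatest_is_greatest (P := fun k => t k ≤ z) (Nat.lt_succ_self j) (Nat.succ_le_of_lt hjlt) hcon
      have hsplit : (∑ k ∈ Finset.range (K + 1), c k * χ k)
          = (∑ k ∈ Finset.range (j + 1), c k * χ k)
            + ∑ k ∈ Finset.Ico (j + 1) (K + 1), c k * χ k := by
        exact (Finset.sum_range_add_sum_Ico _ (by omega : j + 1 ≤ K + 1)).symm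
      have hfirst : (∑ k ∈ Finset.range (j + 1), c k * χ k) = h (t j) := by
        have : ∀ k ∈ Finset.range (j + 1), c k * χ k = c k := by
          intro k hk
          have hk' : k ≤ j := Nat.lt_succ_iff.1 (Finset.mem_range.1 hk)
          have : t k ≤ z := le_trans (ht_mono hk') hj0
          simp [hχdef, this]
        rw [Finset.sum_congr rfl this, Finset.sum_range_sub G, hGsucc j, hG0, sub_zero]
      have hsecond : (∑ k ∈ Finset.Ico (j + 1) (K + 1), c k * χ k) = 0 := by
        apply Finset.sum_eq_zero
        intro k hk
        obtain ⟨hk1, hk2⟩ := Finset.mem_Ico.1 hk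
        have hjk : j < k := hk1
        rw [hjdef] at hjk
        have : ¬ t k ≤ z := Nat.findGreatest_is_greatest hjk (by omega)
        simp [hχdef, this]
      rw [hsplit, hfirst, hsecond, add_zero]
      have : dist (h (t j)) (h z) < δ := by
        apply hηs
        rw [Real.dist_eq, abs_of_nonpos (by linarith)]
        have h1 := htsucc j
        have h2 : s = η / 2 := hsdef
        linarith
      rw [Real.dist_eq] at this
      exact this.le
  -- step 1 : the network approximates the step-function sum
  have step1 : |φ z - ∑ k ∈ Finset.range (K + 1), c k * χ k|
      ≤ 2 * (δ * (C + 1)) + (K + 1) * (δ * δ') := by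
    have hφχ : φ z - (∑ k ∈ Finset.range (K + 1), c k * χ k)
        = ∑ k ∈ Finset.range (K + 1), c k * (ρ ((A : ℝ) * z + B k) - χ k) := by
      rw [hφdef, ← Finset.sum_sub_distrib]
      congr 1; funext k; ring
    rw [hφχ]
    set near : Finset ℕ := (Finset.range (K + 1)).filter (fun k => |z - t k| < s) with hneardef
    set far : Finset ℕ := (Finset.range (K + 1)).filter (fun k => ¬ |z - t k| < s) with hfardef
    have hsplit : (Finset.range (K + 1)) = near ∪ far := (Finset.filter_union_filter_not_eq _ _).symm
    have hdisj : Disjoint near far := Finset.disjoint_filter_filter_not _ _ _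
    calc |∑ k ∈ Finset.range (K + 1), c k * (ρ ((A : ℝ) * z + B k) - χ k)|
        ≤ ∑ k ∈ Finset.range (K + 1), |c k * (ρ ((A : ℝ) * z + B k) - χ k)| :=
          Finset.abs_sum_le_sum_abs _ _
      _ = (∑ k ∈ near, |c k * (ρ ((A : ℝ) * z + B k) - χ k)|)
          + ∑ k ∈ far, |c k * (ρ ((A : ℝ) * z + B k) - χ k)| := by
          rw [hsplit, Finset.sum_union hdisj]
      _ ≤ 2 * (δ * (C + 1)) + (K + 1) * (δ * δ') := by
          gcongr ?_ + ?_
          · -- near part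
            have hcard : near.card ≤ 2 := by
              rcases Finset.eq_empty_or_nonempty near with he | hne
              · simp [he]
              · set m := near.min' hne with hmdef
                have hmmem := near.min'_mem hne
                have hsub2 : near ⊆ Finset.Icc m (m + 1) := by
                  intro k hk
                  have hmk : m ≤ k := near.min'_le k hk
                  have h1 : |z - t m| < s := (Finset.mem_filter.1 hmmem).2
                  have h2 : |z - t k| < s := (Finset.mem_filter.1 hk).2
                  have h3 : t k - t m < 2 * s := by
                    have := abs_lt.1 h1
                    have := abs_lt.1 h2
                    cases abs_lt.1 h1; cases abs_lt.1 h2; linarith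
                  have h4 : ((k : ℝ) - m) * s < 2 * s := by
                    simp only [htdef] at h3
                    nlinarith
                  have h5 : (k : ℝ) - m < 2 := by
                    by_contra hcon
                    push_neg at hcon
                    nlinarith
                  have h6 : (k : ℝ) < m + 2 := by linarith
                  have h7 : k < m + 2 := by exact_mod_cast h6
                  exact Finset.mem_Icc.2 ⟨hmk, by omega⟩
                calc near.card ≤ (Finset.Icc m (m + 1)).card := Finset.card_le_card hsub2
                  _ = 2 := by rw [Nat.card_Icc]; omega
            have hterm : ∀ k ∈ near, |c k * (ρ ((A : ℝ) * z + B k) - χ k)| ≤ δ * (C + 1) := by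
              intro k _
              rw [abs_mul]
              apply mul_le_mul (hc k) ?_ (abs_nonneg _) hδ.le
              calc |ρ ((A : ℝ) * z + B k) - χ k| ≤ |ρ ((A : ℝ) * z + B k)| + |χ k| := abs_sub _ _
                _ ≤ C + 1 := by
                    gcongr
                    · exact hC _
                    · simp only [hχdef]; split <;> simp
            calc (∑ k ∈ near, |c k * (ρ ((A : ℝ) * z + B k) - χ k)|)
                ≤ near.card • (δ * (C + 1)) := Finset.sum_le_card_nsmul _ _ _ hterm
              _ = near.card * (δ * (C + 1)) := nsmul_eq_mul _ _
              _ ≤ 2 * (δ * (C + 1)) := by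
                  apply mul_le_mul_of_nonneg_right _ (by positivity)
                  exact_mod_cast hcard
          · -- far part
            have hterm : ∀ k ∈ far, |c k * (ρ ((A : ℝ) * z + B k) - χ k)| ≤ δ * δ' := by
              intro k hk
              have hfar : ¬ |z - t k| < s := (Finset.mem_filter.1 hk).2
              push_neg at hfar
              rw [abs_mul]
              apply mul_le_mul (hc k) ?_ (abs_nonneg _) hδ.le
              have harg : (A : ℝ) * z + B k = (A : ℝ) * (z - t k) := by
                simp only [hBdef]; ring
              rcases le_or_gt (t k) z with hle | hlt
              · -- t k ≤ z, far : z - t k ≥ s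
                have h1 : s ≤ z - t k := by
                  rw [abs_of_nonneg (by linarith)] at hfar; exact hfar
                have h2 : T ≤ (A : ℝ) * (z - t k) := by
                  calc T ≤ (A : ℝ) * s := hAs
                    _ ≤ (A : ℝ) * (z - t k) := by
                        apply mul_le_mul_of_nonneg_left h1 (by positivity)
                have h3 := hTtop _ h2
                have hχ1 : χ k = 1 := by simp [hχdef, hle]
                rw [harg, hχ1]
                exact h3
              · -- z < t k, far : t k - z ≥ s
                have h1 : s ≤ t k - z := by
                  rw [abs_of_nonpos (by linarith)] at hfar; linarith
                have h2 : (A : ℝ) * (z - t k) ≤ -T := by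
                  have : T ≤ (A : ℝ) * (t k - z) :=
                    le_trans hAs (mul_le_mul_of_nonneg_left h1 (by positivity))
                  nlinarith
                have h3 := hTbot _ h2
                have hχ0 : χ k = 0 := by simp [hχdef, not_le.2 hlt]
                rw [harg, hχ0, sub_zero]
                exact h3
            calc (∑ k ∈ far, |c k * (ρ ((A : ℝ) * z + B k) - χ k)|)
                ≤ far.card • (δ * δ') := Finset.sum_le_card_nsmul _ _ _ hterm
              _ = far.card * (δ * δ') := nsmul_eq_mul _ _
              _ ≤ (K + 1) * (δ * δ') := by
                  apply mul_le_mul_of_nonneg_right _ (by positivity)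
                  have : far.card ≤ (Finset.range (K + 1)).card := Finset.card_le_card (Finset.filter_subset _ _)
                  rw [Finset.card_range] at this
                  exact_mod_cast this
  -- combine
  have hC1 : (C : ℝ) + 1 ≠ 0 := by positivity
  have hKne : ((K : ℝ) + 1) ≠ 0 := by positivity
  have hδne : δ + 1 ≠ 0 := by positivity
  have e1 : 2 * (δ * (C + 1)) = δ0 / 3 := by
    rw [hδdef]; field_simp; ring
  have e2 : ((K : ℝ) + 1) * (δ * δ') ≤ δ0 / 6 := by
    have heq : ((K : ℝ) + 1) * ((δ + 1) * δ') = δ0 / 6 := by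
      rw [hδ'def]; field_simp
    nlinarith [hδ'.le, hδ.le, Nat.cast_nonneg (α := ℝ) K]
  have e3 : δ ≤ δ0 / 6 := by
    rw [hδdef, div_le_div_iff₀ (by positivity) (by norm_num)]
    nlinarith
  have htri : |h z - φ z| ≤ |(∑ k ∈ Finset.range (K + 1), c k * χ k) - h z|
      + |φ z - (∑ k ∈ Finset.range (K + 1), c k * χ k)| := by
    have h0 := abs_sub_le (h z) (∑ k ∈ Finset.range (K + 1), c k * χ k) (φ z)
    rwa [abs_sub_comm (h z) (∑ k ∈ Finset.range (K + 1), c k * χ k),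
      abs_sub_comm (∑ k ∈ Finset.range (K + 1), c k * χ k) (φ z)] at h0
  linarith


lemma dct_limit (ρ : ℝ → ℝ) (hρ : Continuous ρ) (C : ℝ) (hC : ∀ z, |ρ z| ≤ C)
    (hsig₀ : Tendsto ρ atBot (𝓝 0)) (hsig₁ : Tendsto ρ atTop (𝓝 1))
    (m : Measure ℝ) [IsFiniteMeasure m] (t c : ℝ) :
    Tendsto (fun a : ℕ => ∫ z, ρ ((a : ℝ) * z + (c - a * t)) ∂m) atTop
      (𝓝 ((m (Set.Ioi t)).toReal + ρ c * (m {t}).toReal)) := by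
  set flim : ℝ → ℝ := fun z =>
    Set.indicator (Set.Ioi t) (fun _ => (1 : ℝ)) z + Set.indicator {t} (fun _ => ρ c) z
    with hflimdef
  have key : Tendsto (fun a : ℕ => ∫ z, ρ ((a : ℝ) * z + (c - a * t)) ∂m) atTop
      (𝓝 (∫ z, flim z ∂m)) := by
    apply tendsto_integral_of_dominated_convergence (fun _ => C)
    · intro a
      exact (hρ.comp (by continuity)).aestronglyMeasurable
    · exact integrable_const C
    · intro a
      filter_upwards with z
      rw [Real.norm_eq_abs]
      exact hC _
    · filter_upwards with z
      rcases lt_trichotomy z t with hzt | hzt | hzt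
      · have hlim0 : Tendsto (fun a : ℕ => (a : ℝ) * z + (c - a * t)) atTop atBot := by
          have : (fun a : ℕ => (a : ℝ) * z + (c - a * t))
              = fun a : ℕ => (a : ℝ) * (z - t) + c := by funext a; ring
          rw [this]
          exact tendsto_atBot_add_const_right _ c
            (tendsto_natCast_atTop_atTop.atTop_mul_const_of_neg (by linarith))
        have hval : flim z = 0 := by
          simp [hflimdef, Set.indicator_of_notMem, hzt.not_gt, ne_of_lt hzt]
        rw [hval]
        exact hsig₀.comp hlim0
      · subst hzt
        have harg : (fun a : ℕ => ρ ((a : ℝ) * z + (c - a * z))) = fun _ : ℕ => ρ c := by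
          funext a; congr 1; ring
        have hval : flim z = ρ c := by
          simp [hflimdef, Set.indicator_of_notMem]
        rw [hval, harg]
        exact tendsto_const_nhds
      · have hlim1 : Tendsto (fun a : ℕ => (a : ℝ) * z + (c - a * t)) atTop atTop := by
          have : (fun a : ℕ => (a : ℝ) * z + (c - a * t))
              = fun a : ℕ => (a : ℝ) * (z - t) + c := by funext a; ring
          rw [this]
          exact tendsto_atTop_add_const_right _ c
            (tendsto_natCast_atTop_atTop.atTop_mul_const (by linarith))
        have hval : flim z = 1 := by
          simp [hflimdef, Set.indicator_of_mem, hzt, Set.indicator_of_notMem, (ne_of_gt hzt)]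
        rw [hval]
        exact hsig₁.comp hlim1
  have hval : (∫ z, flim z ∂m) = (m (Set.Ioi t)).toReal + ρ c * (m {t}).toReal := by
    rw [hflimdef]
    rw [integral_add]
    · rw [integral_indicator_const (1 : ℝ) measurableSet_Ioi,
        integral_indicator_const (ρ c) (measurableSet_singleton t)]
      simp [mul_comm]
      rfl
    · exact (integrable_const (1 : ℝ)).indicator measurableSet_Ioi
    · exact (integrable_const (ρ c)).indicator (measurableSet_singleton t)
  rwa [hval] at key

lemma discriminatory (ρ : ℝ → ℝ) (hρ : Continuous ρ) (C : ℝ) (hC : ∀ z, |ρ z| ≤ C)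
    (hsig₀ : Tendsto ρ atBot (𝓝 0)) (hsig₁ : Tendsto ρ atTop (𝓝 1))
    (μ : SignedMeasure ℝ)
    (hint : ∀ (a : ℕ) (b : ℝ), signedIntegral μ (fun z => ρ ((a : ℝ) * z + b)) = 0) :
    μ = 0 := by
  set P := μ.toJordanDecomposition.posPart with hP
  set Q := μ.toJordanDecomposition.negPart with hQ
  -- a point where ρ is large and one where ρ is small
  obtain ⟨c₂, hc₂⟩ : ∃ c₂ : ℝ, 3 / 4 < ρ c₂ := by
    have := (Metric.tendsto_nhds.1 hsig₁ (1 / 4) (by norm_num)).exists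
    obtain ⟨c₂, hc₂⟩ := this
    rw [Real.dist_eq] at hc₂
    have := abs_lt.1 hc₂
    exact ⟨c₂, by linarith [this.1]⟩
  obtain ⟨c₁, hc₁⟩ : ∃ c₁ : ℝ, ρ c₁ < 1 / 4 := by
    have := (Metric.tendsto_nhds.1 hsig₀ (1 / 4) (by norm_num)).exists
    obtain ⟨c₁, hc₁⟩ := this
    rw [Real.dist_eq, sub_zero] at hc₁
    exact ⟨c₁, (abs_lt.1 hc₁).2⟩
  -- key identity for all t, c
  have key : ∀ t c : ℝ,
      (P (Set.Ioi t)).toReal + ρ c * (P {t}).toReal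
        = (Q (Set.Ioi t)).toReal + ρ c * (Q {t}).toReal := by
    intro t c
    have hPl := dct_limit ρ hρ C hC hsig₀ hsig₁ P t c
    have hQl := dct_limit ρ hρ C hC hsig₀ hsig₁ Q t c
    have heq : (fun a : ℕ => ∫ z, ρ ((a : ℝ) * z + (c - a * t)) ∂P)
        = fun a : ℕ => ∫ z, ρ ((a : ℝ) * z + (c - a * t)) ∂Q := by
      funext a
      have := hint a (c - a * t)
      rw [signedIntegral] at this
      rw [← hP, ← hQ] at this
      linarith [this]
    rw [heq] at hPl
    exact tendsto_nhds_unique hPl hQl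
  -- equality on {t} and on Ioi t
  have hpoint : ∀ t : ℝ, (P {t}).toReal = (Q {t}).toReal := by
    intro t
    have h1 := key t c₁
    have h2 := key t c₂
    nlinarith [h1, h2]
  have hIoi : ∀ t : ℝ, P (Set.Ioi t) = Q (Set.Ioi t) := by
    intro t
    have h1 := key t c₁
    have hp := hpoint t
    rw [hp] at h1
    have : (P (Set.Ioi t)).toReal = (Q (Set.Ioi t)).toReal := by linarith
    exact (ENNReal.toReal_eq_toReal_iff' (measure_ne_top P _) (measure_ne_top Q _)).1 this
  -- equality of total mass
  have huniv : P Set.univ = Q Set.univ := by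
    have := hint 0 c₂
    rw [signedIntegral] at this
    simp only [Nat.cast_zero, zero_mul, zero_add] at this
    rw [integral_const, integral_const, smul_eq_mul, smul_eq_mul] at this
    have h2 : (P Set.univ).toReal = (Q Set.univ).toReal := by
      have hne : ρ c₂ ≠ 0 := by linarith
      have h3 : ((P Set.univ).toReal - (Q Set.univ).toReal) * ρ c₂ = 0 := by
        have hu : (P Set.univ).toReal * ρ c₂ - (Q Set.univ).toReal * ρ c₂ = 0 := this
        linear_combination hu
      rcases mul_eq_zero.1 h3 with h | h
      · linarith
      · exact absurd h hne
    exact (ENNReal.toReal_eq_toReal_iff' (measure_ne_top P _) (measure_ne_top Q _)).1 h2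
  -- measures are equal
  have hPQ : P = Q := by
    refine MeasureTheory.ext_of_generate_finite (Set.range Set.Ioi)
      (BorelSpace.measurable_eq.trans (borel_eq_generateFrom_Ioi ℝ)) isPiSystem_Ioi ?_ huniv
    rintro s ⟨t, rfl⟩
    exact hIoi t
  -- conclude
  have hμ := μ.toSignedMeasure_toJordanDecomposition
  rw [← hμ]
  show P.toSignedMeasure - Q.toSignedMeasure = 0
  rw [sub_eq_zero]
  congr 1


/-- **(Proposition 4.3, condition (A2)).**  Let `ψ₁ : ℝ → (0,∞)` be an admissible weight
function and `ρ : ℝ → ℝ` continuous, bounded and sigmoidal (`ρ(z) → 0` as `z → -∞` and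
`ρ(z) → 1` as `z → ∞`) with `lim_{z → ±∞} |ρ(a z + b)|/ψ₁ z = 0` for all `a ∈ ℕ₀`,
`b ∈ ℝ`.  Then `ρ` is `ψ₁`-discriminatory, and consequently `𝒩𝒩^ρ` is dense in
`𝓑_{ψ₁}(ℝ)`. -/
theorem sigmoidal_discriminatory_and_dense
    (ψ₁ : ℝ → ℝ) (hψpos : ∀ z, 0 < ψ₁ z)
    (hψadm : ∀ R > 0, IsCompact {z : ℝ | ψ₁ z ≤ R})
    (ρ : ℝ → ℝ) (hρ : Continuous ρ)
    (hbdd : ∃ C : ℝ, ∀ z, |ρ z| ≤ C)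
    (hsig₀ : Tendsto ρ atBot (𝓝 0)) (hsig₁ : Tendsto ρ atTop (𝓝 1))
    (hlim : ∀ (a : ℕ) (b : ℝ),
      Tendsto (fun z => |ρ ((a : ℝ) * z + b)| / ψ₁ z) atTop (𝓝 0) ∧
      Tendsto (fun z => |ρ ((a : ℝ) * z + b)| / ψ₁ z) atBot (𝓝 0)) :
    (∀ μ : SignedMeasure ℝ, Integrable ψ₁ μ.totalVariation →
      (∀ (a : ℕ) (b : ℝ), signedIntegral μ (fun z => ρ ((a : ℝ) * z + b)) = 0) →
      μ = 0) ∧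
    (∀ f : ℝ → ℝ, MemBpsi ψ₁ f → ∀ ε > (0 : ℝ),
      ∃ φ ∈ NNset ρ, ∀ z, |f z - φ z| ≤ ε * ψ₁ z) := by
  obtain ⟨C, hC⟩ := hbdd
  have hC0 : (0 : ℝ) ≤ C := le_trans (abs_nonneg _) (hC 0)
  constructor
  · intro μ _ hint
    exact discriminatory ρ hρ C hC hsig₀ hsig₁ μ hint
  · intro f hf ε hε
    obtain ⟨clo, hclo, hlow⟩ := psi_lower ψ₁ hψpos hψadm
    obtain ⟨g, hgc, ⟨Cg, hCg⟩, hfg⟩ := hf (ε / 3) (by positivity)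
    have hCg0 : (0 : ℝ) ≤ Cg := le_trans (abs_nonneg _) (hCg 0)
    obtain ⟨M₀, hM₀, hMlarge⟩ := psi_large ψ₁ hψadm (3 * (Cg + 1) / ε) (by positivity)
    set M : ℝ := max M₀ 1 with hMdef
    have hM1 : (1 : ℝ) ≤ M := le_max_right _ _
    have hMlarge' : ∀ z : ℝ, M ≤ |z| → 3 * (Cg + 1) / ε ≤ ψ₁ z :=
      fun z hz => hMlarge z (le_trans (le_max_left _ _) hz)
    -- cutoff function
    set lam : ℝ → ℝ := fun z => max 0 (min 1 (M + 1 - |z|)) with hlamdef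
    have hlamc : Continuous lam := by
      apply Continuous.max continuous_const
      apply Continuous.min continuous_const
      exact (continuous_const.sub continuous_abs)
    have hlam01 : ∀ z, 0 ≤ lam z ∧ lam z ≤ 1 := by
      intro z
      refine ⟨le_max_left _ _, ?_⟩
      simp only [hlamdef]
      apply max_le (by norm_num) (min_le_left _ _)
    have hlam1 : ∀ z : ℝ, |z| ≤ M → lam z = 1 := by
      intro z hz
      simp only [hlamdef]
      rw [min_eq_left (by linarith), max_eq_right (by linarith)]
    have hlam0 : ∀ z : ℝ, M + 1 ≤ |z| → lam z = 0 := by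
      intro z hz
      simp only [hlamdef]
      rw [max_eq_left]
      exact le_trans (min_le_right _ _) (by linarith)
    set h : ℝ → ℝ := fun z => g z * lam z with hhdef
    have hhc : Continuous h := hgc.mul hlamc
    have hsupp : ∀ z : ℝ, M + 1 ≤ |z| → h z = 0 := by
      intro z hz; simp only [hhdef]; rw [hlam0 z hz, mul_zero]
    have hgh : ∀ z, |g z - h z| ≤ (ε / 3) * ψ₁ z := by
      intro z
      rcases le_or_gt (|z|) M with hz | hz
      · simp only [hhdef]
        rw [hlam1 z hz, mul_one, sub_self, abs_zero]
        have := hψpos z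
        positivity
      · have hψz : 3 * (Cg + 1) / ε ≤ ψ₁ z := hMlarge' z hz.le
        have h1 : |g z - h z| = |g z| * |1 - lam z| := by
          simp only [hhdef]
          rw [← abs_mul]
          congr 1; ring
        have h2 : |1 - lam z| ≤ 1 := by
          obtain ⟨ha, hb⟩ := hlam01 z
          rw [abs_of_nonneg (by linarith)]; linarith
        have heq : (ε / 3) * (3 * (Cg + 1) / ε) = Cg + 1 := by
          field_simp
        calc |g z - h z| ≤ Cg * 1 :=
              h1.le.trans (mul_le_mul (hCg z) h2 (abs_nonneg _) hCg0)
          _ = Cg := mul_one Cg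
          _ ≤ Cg + 1 := by linarith
          _ = (ε / 3) * (3 * (Cg + 1) / ε) := heq.symm
          _ ≤ (ε / 3) * ψ₁ z := by
              apply mul_le_mul_of_nonneg_left hψz (by positivity)
    obtain ⟨φ, hφmem, hφ⟩ := nn_uniform_approx ρ hρ C hC hsig₀ hsig₁ h hhc (M + 1)
      (by linarith) hsupp ((ε / 3) * clo) (by positivity)
    refine ⟨φ, hφmem, fun z => ?_⟩
    have hφz : |h z - φ z| ≤ (ε / 3) * ψ₁ z :=
      le_trans (hφ z) (mul_le_mul_of_nonneg_left (hlow z) (by positivity))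
    calc |f z - φ z| = |(f z - g z) + ((g z - h z) + (h z - φ z))| := by ring_nf
      _ ≤ |f z - g z| + |(g z - h z) + (h z - φ z)| := abs_add_le _ _
      _ ≤ |f z - g z| + (|g z - h z| + |h z - φ z|) := by
          gcongr; exact abs_add_le _ _
      _ ≤ (ε / 3) * ψ₁ z + ((ε / 3) * ψ₁ z + (ε / 3) * ψ₁ z) := by
          gcongr
          · exact hfg z
          · exact hgh z
      _ = ε * ψ₁ z := by ring
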